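/- Let G be a (not necessarily abelian) group equipped with a total order compatible with the group operation on both sides, and let R be a (not necessarily commutative) G-graded ring. If I is a left ideal of R whose annihilator Ann_R(I) = {r ∈ R : rI = 0} is nonzero, then there exists a nonzero homogeneous element g ∈ R such that gI = 0. -/

import Mathlib

/-- Generalized zero-divisor theorem: if `I` is an unfaithful left ideal of a `G`-graded ring
`R` with `G` a totally ordered (not necessarily abelian) group, then there exists a nonzero
homogeneous element `g ∈ R` such that `g I = 0`. -/
theorem unfaithful_left_ideal_killed_by_homogeneous
    {G : Type*} [AddGroup G] [LinearOrder G] [DecidableEq G]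
    [CovariantClass G G (· + ·) (· ≤ ·)]
    [CovariantClass G G (Function.swap (· + ·)) (· ≤ ·)]
    {R : Type*} [Ring R] (𝒜 : G → AddSubgroup R) [GradedRing 𝒜]
    (I : Ideal R) (h : ∃ c : R, c ≠ 0 ∧ ∀ x ∈ I, c * x = 0) :
    ∃ g : R, g ≠ 0 ∧ SetLike.IsHomogeneousElem 𝒜 g ∧ ∀ x ∈ I, g * x = 0 := by
  classical
  -- strict right-addition monotonicity
  have hlt_right : ∀ {a b : G} (x : G), a < b → a + x < b + x := by
    intro a b x hab
    refine lt_of_le_of_ne (add_le_add_left hab.le x) fun hE => hab.ne (add_right_cancel hE)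
  -- membership in support vs projection
  have hmemsupp : ∀ (x : R) (g : G),
      g ∈ (DirectSum.decompose 𝒜 x).support ↔ GradedRing.proj 𝒜 g x ≠ 0 := by
    intro x g
    rw [DFinsupp.mem_support_iff, GradedRing.proj_apply, Ne, Ne,
      ← ZeroMemClass.coe_eq_zero]
  have hproj_mem : ∀ (x : R) (g : G), GradedRing.proj 𝒜 g x ∈ 𝒜 g := by
    intro x g
    rw [GradedRing.proj_apply]
    exact SetLike.coe_mem _
  -- projection of homogeneous elements
  have hproj_same : ∀ {z : R} {i : G}, z ∈ 𝒜 i → GradedRing.proj 𝒜 i z = z := by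
    intro z i hz
    rw [GradedRing.proj_apply]
    exact DirectSum.decompose_of_mem_same 𝒜 hz
  have hproj_ne : ∀ {z : R} {i j : G}, z ∈ 𝒜 i → i ≠ j → GradedRing.proj 𝒜 j z = 0 := by
    intro z i j hz hij
    rw [GradedRing.proj_apply]
    exact DirectSum.decompose_of_mem_ne 𝒜 hz hij
  have hsum_supp : ∀ x : R,
      (∑ i ∈ (DirectSum.decompose 𝒜 x).support, GradedRing.proj 𝒜 i x) = x := by
    intro x
    simp only [GradedRing.proj_apply]
    exact DirectSum.sum_support_decompose 𝒜 x
  have hsupp_ne : ∀ x : R, x ≠ 0 → (DirectSum.decompose 𝒜 x).support.Nonempty := by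
    intro x hx
    rcases Finset.eq_empty_or_nonempty (DirectSum.decompose 𝒜 x).support with h0 | h0
    · exfalso
      apply hx
      have := hsum_supp x
      rw [h0, Finset.sum_empty] at this
      exact this.symm
    · exact h0
  -- minimal support annihilator
  obtain ⟨c₀, hc₀ne, hc₀ann⟩ := h
  have hex : ∃ n : ℕ, ∃ c : R, c ≠ 0 ∧ (∀ x ∈ I, c * x = 0) ∧
      (DirectSum.decompose 𝒜 c).support.card = n := ⟨_, c₀, hc₀ne, hc₀ann, rfl⟩
  obtain ⟨c, hcne, hcann, hccard⟩ := Nat.find_spec hex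
  set n := Nat.find hex with hn
  have hmin : ∀ a : R, a ≠ 0 → (∀ x ∈ I, a * x = 0) →
      n ≤ (DirectSum.decompose 𝒜 a).support.card :=
    fun a ha hann => Nat.find_min' hex ⟨a, ha, hann, rfl⟩
  have hSne := hsupp_ne c hcne
  set gm := (DirectSum.decompose 𝒜 c).support.max' hSne with hgm
  have hgm_mem : gm ∈ (DirectSum.decompose 𝒜 c).support :=
    Finset.max'_mem _ hSne
  set cl : R := GradedRing.proj 𝒜 gm c with hcl
  have hclmem : cl ∈ 𝒜 gm := hproj_mem c gm
  have hclne : cl ≠ 0 := (hmemsupp c gm).mp hgm_mem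
  -- Lemma 2: for homogeneous r, cl * r = 0 → c * r = 0
  have hL2 : ∀ (d : G) (r : R), r ∈ 𝒜 d → cl * r = 0 → c * r = 0 := by
    intro d r hr h0
    by_contra hne
    -- c * r is again an annihilator of I
    have hannr : ∀ x ∈ I, (c * r) * x = 0 := by
      intro x hx
      rw [mul_assoc]
      have : r * x ∈ I := by
        have := I.smul_mem r hx
        rwa [smul_eq_mul] at this
      exact hcann _ this
    have hcard := hmin (c * r) hne hannr
    -- support of c*r lies in the image of supp c minus gm
    have hsub : (DirectSum.decompose 𝒜 (c * r)).support ⊆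
        ((DirectSum.decompose 𝒜 c).support.erase gm).image (· + d) := by
      intro e he
      rw [hmemsupp] at he
      by_contra hnotin
      apply he
      have hexp : c * r = ∑ g ∈ (DirectSum.decompose 𝒜 c).support,
          GradedRing.proj 𝒜 g c * r := by
        rw [← Finset.sum_mul, hsum_supp]
      rw [hexp, map_sum]
      apply Finset.sum_eq_zero
      intro g hg
      by_cases hge : g + d = e
      · by_cases hggm : g = gm
        · subst hggm
          rw [← hcl, h0, map_zero]
        · exact absurd (Finset.mem_image.2 ⟨g, Finset.mem_erase.2 ⟨hggm, hg⟩, hge⟩) hnotin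
      · exact hproj_ne (SetLike.mul_mem_graded (hproj_mem c g) hr) hge
    have h1 : (DirectSum.decompose 𝒜 (c * r)).support.card ≤ n - 1 := by
      calc (DirectSum.decompose 𝒜 (c * r)).support.card
          ≤ (((DirectSum.decompose 𝒜 c).support.erase gm).image (· + d)).card :=
            Finset.card_le_card hsub
        _ ≤ ((DirectSum.decompose 𝒜 c).support.erase gm).card := Finset.card_image_le
        _ = n - 1 := by rw [Finset.card_erase_of_mem hgm_mem, hccard]
    have hn1 : 1 ≤ n := by
      rw [← hccard]
      exact Finset.card_pos.mpr hSne
    omega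
  -- Lemma 3: if c * y = 0 and the top component of y is at T, then cl kills that component
  have hL3 : ∀ (y : R) (T : G), GradedRing.proj 𝒜 T y ≠ 0 →
      (∀ k ∈ (DirectSum.decompose 𝒜 y).support, k ≤ T) →
      c * y = 0 → cl * GradedRing.proj 𝒜 T y = 0 := by
    intro y T hT hTmax hcy
    have hexp : c * y = ∑ g ∈ (DirectSum.decompose 𝒜 c).support,
        ∑ e ∈ (DirectSum.decompose 𝒜 y).support,
          GradedRing.proj 𝒜 g c * GradedRing.proj 𝒜 e y := by
      conv_lhs => rw [← hsum_supp c, ← hsum_supp y]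
      rw [Finset.sum_mul]
      exact Finset.sum_congr rfl fun g _ => Finset.mul_sum _ _ _
    have h0 : GradedRing.proj 𝒜 (gm + T) (c * y) = 0 := by rw [hcy, map_zero]
    rw [hexp, map_sum] at h0
    rw [← h0]
    symm
    rw [Finset.sum_eq_single gm]
    · rw [map_sum, Finset.sum_eq_single T]
      · exact hproj_same (SetLike.mul_mem_graded hclmem (hproj_mem y T))
      · intro e he hne
        refine hproj_ne (SetLike.mul_mem_graded hclmem (hproj_mem y e)) fun hE => ?_
        exact hne (add_left_cancel hE)
      · intro hTn
        exact absurd ((hmemsupp y T).mpr hT) hTn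
    · intro g hg hne
      rw [map_sum]
      apply Finset.sum_eq_zero
      intro e he
      have hglt : g < gm := lt_of_le_of_ne (Finset.le_max' _ g hg) hne
      have : g + e < gm + T :=
        lt_of_lt_of_le (hlt_right e hglt) (add_le_add_right (hTmax e he) gm)
      exact hproj_ne (SetLike.mul_mem_graded (hproj_mem c g) (hproj_mem y e)) this.ne
    · intro hgmn
      exact absurd hgm_mem hgmn
  -- core step: if c kills all higher components of x ∈ I, then cl and c kill the j-component
  have core : ∀ x ∈ I, ∀ j : G,
      (∀ k ∈ (DirectSum.decompose 𝒜 x).support, j < k → c * GradedRing.proj 𝒜 k x = 0) →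
      cl * GradedRing.proj 𝒜 j x = 0 ∧ c * GradedRing.proj 𝒜 j x = 0 := by
    intro x hx j hk
    by_cases hj0 : GradedRing.proj 𝒜 j x = 0
    · rw [hj0, mul_zero, mul_zero]
      exact ⟨rfl, rfl⟩
    · set F := (DirectSum.decompose 𝒜 x).support.filter (fun k => j < k) with hF
      set y := x - ∑ k ∈ F, GradedRing.proj 𝒜 k x with hy
      have hcy : c * y = 0 := by
        rw [hy, mul_sub, Finset.mul_sum, hcann x hx]
        rw [Finset.sum_eq_zero fun k hkF => hk k (Finset.mem_filter.mp hkF).1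
            (Finset.mem_filter.mp hkF).2]
        rw [sub_zero]
      have hyproj : ∀ e : G, GradedRing.proj 𝒜 e y =
          if j < e then 0 else GradedRing.proj 𝒜 e x := by
        intro e
        rw [hy, map_sub, map_sum]
        by_cases hje : j < e
        · rw [if_pos hje]
          by_cases heF : e ∈ F
          · rw [Finset.sum_eq_single e]
            · rw [hproj_same (hproj_mem x e), sub_self]
            · intro k hkF hkne
              exact hproj_ne (hproj_mem x k) hkne
            · intro hen
              exact absurd heF hen
          · have hex0 : GradedRing.proj 𝒜 e x = 0 := by
              by_contra hne
              exact heF (Finset.mem_filter.2 ⟨(hmemsupp x e).mpr hne, hje⟩)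
            rw [hex0, Finset.sum_eq_zero, sub_zero]
            intro k hkF
            refine hproj_ne (hproj_mem x k) fun hE => ?_
            subst hE
            exact heF hkF
        · rw [if_neg hje, Finset.sum_eq_zero, sub_zero]
          intro k hkF
          refine hproj_ne (hproj_mem x k) fun hE => ?_
          subst hE
          exact hje (Finset.mem_filter.mp hkF).2
      have hyj : GradedRing.proj 𝒜 j y = GradedRing.proj 𝒜 j x := by
        rw [hyproj j, if_neg (lt_irrefl j)]
      have hyjne : GradedRing.proj 𝒜 j y ≠ 0 := by rw [hyj]; exact hj0
      have hymax : ∀ k ∈ (DirectSum.decompose 𝒜 y).support, k ≤ j := by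
        intro k hkm
        by_contra hgt
        rw [not_le] at hgt
        have := (hmemsupp y k).mp hkm
        rw [hyproj k, if_pos hgt] at this
        exact this rfl
      have h1 : cl * GradedRing.proj 𝒜 j x = 0 := by
        rw [← hyj]
        exact hL3 y j hyjne hymax hcy
      exact ⟨h1, hL2 j _ (hproj_mem x j) h1⟩
  -- main induction on the number of support elements above j
  have main : ∀ m : ℕ, ∀ x ∈ I, ∀ j : G,
      ((DirectSum.decompose 𝒜 x).support.filter (fun k => j < k)).card ≤ m →
      cl * GradedRing.proj 𝒜 j x = 0 ∧ c * GradedRing.proj 𝒜 j x = 0 := by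
    intro m
    induction m with
    | zero =>
      intro x hx j hcard
      refine core x hx j fun k hkm hjk => ?_
      exfalso
      have hmem : k ∈ (DirectSum.decompose 𝒜 x).support.filter (fun k' => j < k') :=
        Finset.mem_filter.2 ⟨hkm, hjk⟩
      have := Finset.card_pos.mpr ⟨k, hmem⟩
      omega
    | succ m IH =>
      intro x hx j hcard
      refine core x hx j fun k hkm hjk => ?_
      have hss : (DirectSum.decompose 𝒜 x).support.filter (fun k' => k < k') ⊂
          (DirectSum.decompose 𝒜 x).support.filter (fun k' => j < k') := by
        refine Finset.ssubset_iff_of_subset ?_ |>.mpr ?_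
        · intro k' hk'
          rw [Finset.mem_filter] at hk' ⊢
          exact ⟨hk'.1, hjk.trans hk'.2⟩
        · exact ⟨k, Finset.mem_filter.2 ⟨hkm, hjk⟩, by simp⟩
      have := Finset.card_lt_card hss
      exact (IH x hx k (by omega)).2
  refine ⟨cl, hclne, ⟨gm, hclmem⟩, ?_⟩
  intro x hx
  conv_lhs => rw [← hsum_supp x]
  rw [Finset.mul_sum]
  exact Finset.sum_eq_zero fun j _ => (main _ x hx j le_rfl).1
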